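/- Let V, W be closed subspaces of H with H = V ⊕ W⊥, and T ∈ L(H,K) with Ker(T) = W⊥. Let L_T^W = {U ∈ L(K,H) : UT = π_W and Im(U) = W} and L_T^{V,W⊥} = {U ∈ L(K,H) : UT = π_{V,W⊥} and Im(U) = V}. Then the map A ↦ π_{V,W⊥}A is a linear bijection from L_T^W onto L_T^{V,W⊥}, with inverse B ↦ π_W B. -/

import Mathlib

/-- Let `V`, `W` be closed subspaces of `H` with `H = V ⊕ Wᗮ`, and `T : H → K` bounded
with `ker T = Wᗮ`. Let `L_T^W` be the set of bounded left inverses `U` of `T` with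
`U T = π_W` and `range U = W`, and `L_T^{V,Wᗮ}` the set of `U` with `U T = π_{V,Wᗮ}`
and `range U = V`. Then `A ↦ π_{V,Wᗮ} A` is a linear bijection from `L_T^W` onto
`L_T^{V,Wᗮ}` whose inverse is `B ↦ π_W B`. -/
theorem left_inverse_oblique_left_inverse_bijection
    {H K : Type*} [NormedAddCommGroup H] [InnerProductSpace ℂ H] [CompleteSpace H]
    [NormedAddCommGroup K] [InnerProductSpace ℂ K] [CompleteSpace K]
    (V W : Submodule ℂ H) [CompleteSpace V] [CompleteSpace W]
    (hcompl : IsCompl V Wᗮ)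
    (T : H →L[ℂ] K) (hker : LinearMap.ker (T : H →ₗ[ℂ] K) = Wᗮ)
    (P : H →L[ℂ] H) (hPV : ∀ f ∈ V, P f = f) (hPW : ∀ f ∈ Wᗮ, P f = 0)
    (LW : Set (K →L[ℂ] H)) (LVW : Set (K →L[ℂ] H))
    (hLW : LW = {U : K →L[ℂ] H | U.comp T = W.subtypeL.comp W.orthogonalProjectionOnto
        ∧ LinearMap.range (U : K →ₗ[ℂ] H) = W})
    (hLVW : LVW = {U : K →L[ℂ] H | U.comp T = P ∧ LinearMap.range (U : K →ₗ[ℂ] H) = V}) :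
    Set.BijOn (fun U => P.comp U) LW LVW
      ∧ (∀ A ∈ LW, (W.subtypeL.comp W.orthogonalProjectionOnto).comp (P.comp A) = A)
      ∧ (∀ B ∈ LVW, P.comp ((W.subtypeL.comp W.orthogonalProjectionOnto).comp B) = B)
      ∧ (∀ A A' : K →L[ℂ] H, P.comp (A + A') = P.comp A + P.comp A')
      ∧ (∀ (c : ℂ) (A : K →L[ℂ] H), P.comp (c • A) = c • P.comp A) := by
  subst hLW hLVW
  set Q : H →L[ℂ] H := W.subtypeL.comp W.orthogonalProjectionOnto with hQ
  have hQapp : ∀ h : H, Q h = (W.orthogonalProjectionOnto h : H) := fun h => rfl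
  have hQmem : ∀ h : H, Q h ∈ W := fun h => (W.orthogonalProjectionOnto h).2
  have hQid : ∀ w ∈ W, Q w = w := fun w hw => by
    exact W.starProjection_eq_self_iff.2 hw
  have hQzero : ∀ u ∈ Wᗮ, Q u = 0 := fun u hu => by
    rw [hQapp, Submodule.orthogonalProjectionOnto_apply_of_mem_orthogonal hu,
      Submodule.coe_zero]
  have hdecomp : ∀ h : H, ∃ v ∈ V, ∃ u ∈ Wᗮ, v + u = h := by
    intro h
    have : h ∈ V ⊔ Wᗮ := by rw [hcompl.sup_eq_top]; trivial
    exact Submodule.mem_sup.1 this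
  have hPmem : ∀ h : H, P h ∈ V := by
    intro h
    obtain ⟨v, hv, u, hu, rfl⟩ := hdecomp h
    rw [map_add, hPV v hv, hPW u hu, add_zero]; exact hv
  have hsub : ∀ h : H, h - P h ∈ Wᗮ := by
    intro h
    obtain ⟨v, hv, u, hu, rfl⟩ := hdecomp h
    rw [map_add, hPV v hv, hPW u hu, add_zero, add_sub_cancel_left]; exact hu
  have hPQ : ∀ h : H, P (Q h) = P h := by
    intro h
    have h1 : h - Q h ∈ Wᗮ := W.sub_starProjection_mem_orthogonal h
    have h2 := hPW _ h1
    rw [map_sub, sub_eq_zero] at h2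
    exact h2.symm
  have hQP : ∀ h : H, Q (P h) = Q h := by
    intro h
    have h2 := hQzero _ (hsub h)
    rw [map_sub, sub_eq_zero] at h2
    exact h2.symm
  have hmapsto : ∀ A : K →L[ℂ] H, A.comp T = Q ∧ LinearMap.range (A : K →ₗ[ℂ] H) = W →
      (P.comp A).comp T = P ∧ LinearMap.range ((P.comp A : K →L[ℂ] H) : K →ₗ[ℂ] H) = V := by
    rintro A ⟨hA1, hA2⟩
    constructor
    · ext h
      have : A (T h) = Q h := congrFun (congrArg DFunLike.coe hA1) h
      simp only [ContinuousLinearMap.comp_apply, this, hPQ]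
    · apply le_antisymm
      · rintro x ⟨k, rfl⟩
        exact hPmem _
      · intro v hv
        have : Q v ∈ LinearMap.range (A : K →ₗ[ℂ] H) := hA2.symm ▸ hQmem v
        obtain ⟨k, hk⟩ := this
        exact ⟨k, by simp only [ContinuousLinearMap.coe_coe] at hk ⊢; simp only [ContinuousLinearMap.comp_apply, hk, hPQ, hPV v hv]⟩
  have hinvQ : ∀ B : K →L[ℂ] H, B.comp T = P ∧ LinearMap.range (B : K →ₗ[ℂ] H) = V →
      (Q.comp B).comp T = Q ∧ LinearMap.range ((Q.comp B : K →L[ℂ] H) : K →ₗ[ℂ] H) = W ∧ P.comp (Q.comp B) = B := by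
    rintro B ⟨hB1, hB2⟩
    have hBmem : ∀ k, B k ∈ V := fun k => hB2 ▸ ⟨k, rfl⟩
    refine ⟨?_, ?_, ?_⟩
    · ext h
      have : B (T h) = P h := congrFun (congrArg DFunLike.coe hB1) h
      simp only [ContinuousLinearMap.comp_apply, this, hQP]
    · apply le_antisymm
      · rintro x ⟨k, rfl⟩
        exact hQmem _
      · intro w hw
        have : P w ∈ LinearMap.range (B : K →ₗ[ℂ] H) := hB2.symm ▸ hPmem w
        obtain ⟨k, hk⟩ := this
        exact ⟨k, by simp only [ContinuousLinearMap.coe_coe] at hk ⊢; simp only [ContinuousLinearMap.comp_apply, hk, hQP, hQid w hw]⟩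
    · ext k
      simp only [ContinuousLinearMap.comp_apply, hPQ, hPV _ (hBmem k)]
  have hQPA : ∀ A : K →L[ℂ] H, A.comp T = Q ∧ LinearMap.range (A : K →ₗ[ℂ] H) = W →
      Q.comp (P.comp A) = A := by
    rintro A ⟨hA1, hA2⟩
    have hAmem : ∀ k, A k ∈ W := fun k => hA2 ▸ ⟨k, rfl⟩
    ext k
    simp only [ContinuousLinearMap.comp_apply, hQP, hQid _ (hAmem k)]
  refine ⟨⟨fun A hA => hmapsto A hA, ?_, ?_⟩, fun A hA => hQPA A hA,
    fun B hB => (hinvQ B hB).2.2, fun A A' => by ext k; simp, fun c A => by ext k; simp⟩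
  · intro A hA A' hA' hE
    have h1 := hQPA A hA
    have h2 := hQPA A' hA'
    simp only at hE
    rw [← h1, ← h2, hE]
  · intro B hB
    obtain ⟨h1, h2, h3⟩ := hinvQ B hB
    exact ⟨Q.comp B, ⟨h1, h2⟩, h3⟩
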